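/- If a pair (G*, P) satisfies the restricted faithfulness assumption (adjacency-faithfulness plus orientation-faithfulness) and is Markov, then (G*, P) satisfies the sparsest Markov representation assumption: any DAG Markov with respect to P that is not Markov-equivalent to G* has strictly more edges than G*. -/

import Mathlib

open scoped Classical

/-- A directed acyclic graph on `Fin p`: a finite edge set together with a
topological ordering witnessing acyclicity. -/
structure DAG (p : ℕ) where
  edges : Finset (Fin p × Fin p)
  acyclic : ∃ σ : Equiv.Perm (Fin p), ∀ e ∈ edges, σ.symm e.1 < σ.symm e.2

namespace DAG

variable {p : ℕ}

def edgeRel (G : DAG p) (a b : Fin p) : Prop := (a, b) ∈ G.edges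

/-- adjacency in the skeleton -/
def adj (G : DAG p) (a b : Fin p) : Prop := (a, b) ∈ G.edges ∨ (b, a) ∈ G.edges

/-- the skeleton as a finite set of unordered pairs -/
def skeleton (G : DAG p) : Finset (Sym2 (Fin p)) := G.edges.image (fun e => s(e.1, e.2))

/-- `b` is a collider on a path segment `a - b - c`. -/
def isCollider (G : DAG p) (a b c : Fin p) : Prop := (a, b) ∈ G.edges ∧ (c, b) ∈ G.edges

/-- `b` is in `S` or an ancestor of some element of `S`. -/
def ancestorOfSet (G : DAG p) (b : Fin p) (S : Finset (Fin p)) : Prop :=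
  ∃ s ∈ S, Relation.ReflTransGen G.edgeRel b s

/-- a (simple, undirected) path from `i` to `j` in the skeleton, as a list of vertices -/
def IsTrail (G : DAG p) (i j : Fin p) (l : List (Fin p)) : Prop :=
  l.Chain' G.adj ∧ l.Nodup ∧ 2 ≤ l.length ∧ l.head? = some i ∧ l.getLast? = some j

/-- the path `l` d-connects its endpoints given `S`: every collider on it is in `S` or
has a descendant in `S`, and every non-collider on it is not in `S`. -/
def dConnectsPath (G : DAG p) (S : Finset (Fin p)) (l : List (Fin p)) : Prop :=
  ∀ a b c : Fin p, [a, b, c] <:+: l →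
    (G.isCollider a b c → G.ancestorOfSet b S) ∧ (¬ G.isCollider a b c → b ∉ S)

def dConnected (G : DAG p) (i j : Fin p) (S : Finset (Fin p)) : Prop :=
  ∃ l : List (Fin p), G.IsTrail i j l ∧ G.dConnectsPath S l

def dSep (G : DAG p) (i j : Fin p) (S : Finset (Fin p)) : Prop :=
  i ≠ j ∧ ¬ G.dConnected i j S

end DAG

/-- A (pairwise) conditional independence model: `CI i j S` means
`X_i ⫫ X_j | X_S`. -/
abbrev CIModel (p : ℕ) := Fin p → Fin p → Finset (Fin p) → Prop

variable {p : ℕ}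

/-- `G` is Markov w.r.t. the CI model: every d-separation is a CI statement. -/
def Markov (G : DAG p) (CI : CIModel p) : Prop :=
  ∀ i j S, G.dSep i j S → CI i j S

/-- Markov equivalence: same d-separation statements. -/
def MarkovEquiv (G G' : DAG p) : Prop :=
  ∀ i j S, G.dSep i j S ↔ G'.dSep i j S

/-- `π` is a topological ordering of `G`. -/
def IsTopOrder (G : DAG p) (π : Equiv.Perm (Fin p)) : Prop :=
  ∀ e ∈ G.edges, π.symm e.1 < π.symm e.2

/-- the predecessors `{π 0, …, π (k-1)}` of position `k` in the ordering `π` -/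
def predSet (π : Equiv.Perm (Fin p)) (k : Fin p) : Finset (Fin p) :=
  (Finset.univ.filter (fun m => m < k)).image π

/-- The minimal I-map `G_π`: for `j < k` there is an edge `π j → π k` iff
`π j` and `π k` are conditionally dependent given all other predecessors of `π k`. -/
noncomputable def minimalIMap (CI : CIModel p) (π : Equiv.Perm (Fin p)) : DAG p where
  edges := Finset.univ.filter (fun q : Fin p × Fin p =>
    ∃ j k : Fin p, j < k ∧ q = (π j, π k) ∧ ¬ CI (π j) (π k) ((predSet π k).erase (π j)))
  acyclic := ⟨π, by
    intro e he
    rw [Finset.mem_filter] at he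
    obtain ⟨-, j, k, hjk, rfl, -⟩ := he
    simpa using hjk⟩

/-- the minimal number of edges of a minimal I-map `G_π` over all permutations `π` -/
noncomputable def spScore (CI : CIModel p) : ℕ :=
  ((Finset.univ : Finset (Equiv.Perm (Fin p))).image
    (fun π => (minimalIMap CI π).edges.card)).min' (Finset.univ_nonempty.image _)

/-- adjacency-faithfulness: endpoints of edges of `G` are conditionally dependent
given any conditioning set. -/
def AdjFaithful (G : DAG p) (CI : CIModel p) : Prop :=
  ∀ e ∈ G.edges, ∀ S : Finset (Fin p), e.1 ∉ S → e.2 ∉ S →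
    ¬ CI e.1 e.2 S ∧ ¬ CI e.2 e.1 S

/-- the sparsest Markov representation assumption -/
def SMR (G : DAG p) (CI : CIModel p) : Prop :=
  Markov G CI ∧
    ∀ G' : DAG p, Markov G' CI → ¬ MarkovEquiv G' G → G.edges.card < G'.edges.card

/-- the set of d-separation statements of `G` -/
def DsepSet (G : DAG p) : Set (Fin p × Fin p × Finset (Fin p)) :=
  {t | G.dSep t.1 t.2.1 t.2.2}

/-- P-minimality: no Markov DAG entails strictly more d-separations. -/
def PMinimal (G : DAG p) (CI : CIModel p) : Prop :=
  ∀ G' : DAG p, Markov G' CI → ¬ (DsepSet G ⊂ DsepSet G')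


/-- orientation-faithfulness: for every unshielded triple `(j, ℓ, k)` and every `S`
such that `j` and `k` are d-connected given `S`, `X_j` and `X_k` are conditionally
dependent given `X_S`. -/
def OrientFaithful (G : DAG p) (CI : CIModel p) : Prop :=
  ∀ j ℓ k : Fin p, G.adj j ℓ → G.adj ℓ k → ¬ G.adj j k → j ≠ k →
    ∀ S : Finset (Fin p), G.dConnected j k S → ¬ CI j k S ∧ ¬ CI k j S

-- ======================= auxiliary development =======================
namespace SMRAux

open DAG Relation

variable {p : ℕ}

/-- monotonicity of a topological order along reflexive-transitive closure -/
lemma rtg_mono (G : DAG p) (σ : Equiv.Perm (Fin p))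
    (hσ : ∀ e ∈ G.edges, σ.symm e.1 < σ.symm e.2) {a b : Fin p}
    (h : Relation.ReflTransGen G.edgeRel a b) : σ.symm a ≤ σ.symm b := by
  induction h with
  | refl => exact le_rfl
  | tail _ hbc ih => exact le_of_lt (lt_of_le_of_lt ih (hσ _ hbc))

lemma tg_mono (G : DAG p) (σ : Equiv.Perm (Fin p))
    (hσ : ∀ e ∈ G.edges, σ.symm e.1 < σ.symm e.2) {a b : Fin p}
    (h : Relation.TransGen G.edgeRel a b) : σ.symm a < σ.symm b := by
  induction h with
  | single h => exact hσ _ h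
  | tail _ hbc ih => exact lt_trans ih (hσ _ hbc)

lemma not_tg_self (G : DAG p) (a : Fin p) : ¬ Relation.TransGen G.edgeRel a a := by
  intro h
  obtain ⟨σ, hσ⟩ := G.acyclic
  exact lt_irrefl _ (tg_mono G σ hσ h)

lemma edge_irrefl (G : DAG p) (a : Fin p) : (a, a) ∉ G.edges := fun h =>
  not_tg_self G a (Relation.TransGen.single h)

lemma edge_asymm (G : DAG p) {a b : Fin p} (h : (a, b) ∈ G.edges) : (b, a) ∉ G.edges :=
  fun h' => not_tg_self G a ((Relation.TransGen.single (α := Fin p) h).tail h')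

lemma no_cycle3 (G : DAG p) {a b c : Fin p} (h1 : (a, b) ∈ G.edges)
    (h2 : (b, c) ∈ G.edges) (h3 : (c, a) ∈ G.edges) : False :=
  not_tg_self G a (((Relation.TransGen.single (α := Fin p) h1).tail h2).tail h3)

lemma adj_ne (G : DAG p) {a b : Fin p} (h : G.adj a b) : a ≠ b := by
  rintro rfl
  rcases h with h | h <;> exact edge_irrefl G a h

lemma adj_symm (G : DAG p) {a b : Fin p} (h : G.adj a b) : G.adj b a := h.symm

lemma an_mono (G : DAG p) {a b : Fin p} {S : Finset (Fin p)} (h : (a, b) ∈ G.edges)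
    (hb : G.ancestorOfSet b S) : G.ancestorOfSet a S := by
  obtain ⟨s, hs, hr⟩ := hb
  exact ⟨s, hs, Relation.ReflTransGen.trans (Relation.ReflTransGen.single h) hr⟩

lemma an_of_mem (G : DAG p) {b : Fin p} {S : Finset (Fin p)} (h : b ∈ S) :
    G.ancestorOfSet b S := ⟨b, h, Relation.ReflTransGen.refl⟩

lemma an_rtg (G : DAG p) {a b : Fin p} {S : Finset (Fin p)}
    (h : Relation.ReflTransGen G.edgeRel a b) (hb : G.ancestorOfSet b S) :
    G.ancestorOfSet a S := by
  obtain ⟨s, hs, hr⟩ := hb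
  exact ⟨s, hs, h.trans hr⟩

/-- the `ok` condition for a triple on an active walk -/
def ok (G : DAG p) (S : Finset (Fin p)) (a b c : Fin p) : Prop :=
  (G.isCollider a b c → G.ancestorOfSet b S) ∧ (¬ G.isCollider a b c → b ∉ S)

/-- active walk (not necessarily simple) -/
def ActiveW (G : DAG p) (S : Finset (Fin p)) (i j : Fin p) (l : List (Fin p)) : Prop :=
  l.Chain' G.adj ∧ 2 ≤ l.length ∧ l[0]? = some i ∧ l[l.length - 1]? = some j ∧
  ∀ n a b c, l[n]? = some a → l[n+1]? = some b → l[n+2]? = some c → ok G S a b c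

lemma chain'_getElem? {α : Type*} {R : α → α → Prop} {l : List α} (h : l.Chain' R)
    {n : ℕ} {a b : α} (ha : l[n]? = some a) (hb : l[n+1]? = some b) : R a b := by
  rw [List.getElem?_eq_some_iff] at ha hb
  obtain ⟨h1, rfl⟩ := ha; obtain ⟨h2, rfl⟩ := hb
  exact List.isChain_iff_getElem.1 h n (by omega)

lemma chain'_of_getElem? {α : Type*} {R : α → α → Prop} {l : List α}
    (h : ∀ n a b, l[n]? = some a → l[n+1]? = some b → R a b) : l.Chain' R := by
  show l.IsChain R
  rw [List.isChain_iff_getElem]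
  intro i hi
  exact h i _ _ (List.getElem?_eq_getElem (by omega)) (List.getElem?_eq_getElem (by omega))

lemma triple_infix_iff {α : Type*} {l : List α} {a b c : α} :
    [a, b, c] <:+: l ↔ ∃ n, l[n]? = some a ∧ l[n+1]? = some b ∧ l[n+2]? = some c := by
  constructor
  · rintro ⟨s, t, rfl⟩
    have hr : s ++ [a, b, c] ++ t = s ++ ([a, b, c] ++ t) := by simp
    refine ⟨s.length, ?_, ?_, ?_⟩ <;>
      rw [hr, List.getElem?_append_right (by omega)] <;>
      simp
  · rintro ⟨n, ha, hb, hc⟩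
    rw [List.getElem?_eq_some_iff] at ha hb hc
    obtain ⟨h1, rfl⟩ := ha; obtain ⟨h2, rfl⟩ := hb; obtain ⟨h3, rfl⟩ := hc
    refine ⟨l.take n, l.drop (n+3), ?_⟩
    have key : l.drop n = l[n] :: l[n+1] :: l[n+2] :: l.drop (n+3) := by
      rw [List.drop_eq_getElem_cons h1, List.drop_eq_getElem_cons h2, List.drop_eq_getElem_cons h3]
    conv_rhs => rw [← List.take_append_drop n l, key]
    simp

/-- bridge: dConnected ↔ existence of a simple active walk -/
lemma dConnected_iff_activeW (G : DAG p) (S : Finset (Fin p)) (i j : Fin p) :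
    G.dConnected i j S ↔ ∃ l, l.Nodup ∧ ActiveW G S i j l := by
  constructor
  · rintro ⟨l, ⟨hc, hnd, hlen, hh, hl⟩, hd⟩
    refine ⟨l, hnd, hc, hlen, by rwa [List.head?_eq_getElem?] at hh,
      by rwa [List.getLast?_eq_getElem?] at hl, ?_⟩
    intro n a b c ha hb hcc
    exact hd a b c (triple_infix_iff.2 ⟨n, ha, hb, hcc⟩)
  · rintro ⟨l, hnd, hc, hlen, hh, hl, hok⟩
    refine ⟨l, ⟨hc, hnd, hlen, by rwa [List.head?_eq_getElem?],
      by rwa [List.getLast?_eq_getElem?]⟩, ?_⟩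
    intro a b c hinf
    obtain ⟨n, ha, hb, hcc⟩ := triple_infix_iff.1 hinf
    exact hok n a b c ha hb hcc

lemma nodup_ne (l : List (Fin p)) (hnd : l.Nodup) {n m : ℕ} {a b : Fin p}
    (ha : l[n]? = some a) (hb : l[m]? = some b) (hnm : n ≠ m) : a ≠ b := by
  rw [List.getElem?_eq_some_iff] at ha hb
  obtain ⟨h1, rfl⟩ := ha; obtain ⟨h2, rfl⟩ := hb
  intro hctr
  have := List.nodup_iff_injective_get.1 hnd (a₁ := ⟨n, h1⟩) (a₂ := ⟨m, h2⟩) (by simpa using hctr)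
  simp at this; omega

end SMRAux

namespace SMRAux
open DAG Relation
variable {p : ℕ}

/-- a directed path witnessing membership in `An(S)` -/
def dPath (G : DAG p) (S : Finset (Fin p)) (v : Fin p) (L : List (Fin p)) : Prop :=
  L.Chain' G.edgeRel ∧ L[0]? = some v ∧ ∃ s ∈ S, L[L.length - 1]? = some s

noncomputable def distS (G : DAG p) (S : Finset (Fin p)) (v : Fin p) : ℕ :=
  sInf {n | ∃ L, dPath G S v L ∧ L.length = n + 1}

lemma lt_len_of_getElem? {α : Type*} {l : List α} {n : ℕ} {a : α}
    (h : l[n]? = some a) : n < l.length := by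
  rw [List.getElem?_eq_some_iff] at h; exact h.1

lemma dPath_len_pos {G : DAG p} {S v L} (h : dPath G S v L) : 1 ≤ L.length := by
  obtain ⟨-, h0, -⟩ := h
  exact lt_len_of_getElem? h0

lemma rtg_of_chain' {α : Type*} {R : α → α → Prop} {L : List α} (hc : L.Chain' R)
    {n m : ℕ} {a b : α} (hn : L[n]? = some a) (hm : L[m]? = some b) (hnm : n ≤ m) :
    Relation.ReflTransGen R a b := by
  induction m generalizing b with
  | zero =>
    have : n = 0 := by omega
    subst this; rw [hn] at hm
    cases hm; exact Relation.ReflTransGen.refl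
  | succ k ih =>
    rcases Nat.eq_or_lt_of_le hnm with h | h
    · subst h; rw [hn] at hm; cases hm; exact Relation.ReflTransGen.refl
    · have hk : k < L.length := by
        have := lt_len_of_getElem? hm; omega
      have hkk : L[k]? = some L[k] := List.getElem?_eq_getElem hk
      exact (ih hkk (by omega)).tail (chain'_getElem? hc hkk hm)

lemma an_iff_dPath {G : DAG p} {S : Finset (Fin p)} {v : Fin p} :
    G.ancestorOfSet v S ↔ ∃ L, dPath G S v L := by
  constructor
  · rintro ⟨s, hs, hr⟩
    obtain ⟨l, hl, hlast⟩ := List.exists_isChain_cons_of_relationReflTransGen hr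
    refine ⟨v :: l, hl, by simp, s, hs, ?_⟩
    rw [← List.getLast?_eq_getElem?, List.getLast?_eq_getLast (by simp), hlast]
  · rintro ⟨L, hc, h0, s, hs, hlast⟩
    exact ⟨s, hs, rtg_of_chain' hc h0 hlast (by have := lt_len_of_getElem? h0; omega)⟩

lemma distS_le {G : DAG p} {S v L} (h : dPath G S v L) : distS G S v ≤ L.length - 1 :=
  Nat.sInf_le ⟨L, h, by have := dPath_len_pos h; omega⟩

lemma distS_spec {G : DAG p} {S : Finset (Fin p)} {v : Fin p} (h : G.ancestorOfSet v S) :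
    ∃ L, dPath G S v L ∧ L.length = distS G S v + 1 := by
  obtain ⟨L, hL⟩ := an_iff_dPath.1 h
  have hne : {n | ∃ L, dPath G S v L ∧ L.length = n + 1}.Nonempty :=
    ⟨L.length - 1, L, hL, by have := dPath_len_pos hL; omega⟩
  exact Nat.sInf_mem hne

lemma distS_zero_of_mem {G : DAG p} {S : Finset (Fin p)} {v : Fin p} (h : v ∈ S) :
    distS G S v = 0 :=
  Nat.le_zero.1 (Nat.sInf_le ⟨[v], ⟨List.IsChain.singleton v, rfl, v, h, rfl⟩, rfl⟩)

lemma mem_of_distS_zero {G : DAG p} {S : Finset (Fin p)} {v : Fin p}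
    (han : G.ancestorOfSet v S) (h : distS G S v = 0) : v ∈ S := by
  obtain ⟨L, ⟨-, h0, s, hs, hlast⟩, hlen⟩ := distS_spec han
  rw [h] at hlen
  rw [hlen] at hlast
  simp only [Nat.add_sub_cancel] at hlast
  rw [h0] at hlast; cases hlast; exact hs

lemma distS_le_succ {G : DAG p} {S : Finset (Fin p)} {v d : Fin p}
    (he : (v, d) ∈ G.edges) (hd : G.ancestorOfSet d S) :
    distS G S v ≤ distS G S d + 1 := by
  obtain ⟨L, ⟨hc, h0, s, hs, hlast⟩, hlen⟩ := distS_spec hd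
  have hL1 : 1 ≤ L.length := by omega
  have : dPath G S v (v :: L) := by
    refine ⟨List.isChain_cons.2 ⟨?_, hc⟩, by simp, s, hs, ?_⟩
    · intro y hy
      rw [List.head?_eq_getElem?, h0] at hy; cases hy; exact he
    · simp only [List.length_cons]
      rw [show v :: L = [v] ++ L from rfl, List.getElem?_append_right (by simp; omega)]
      simpa using hlast
  calc distS G S v ≤ (v :: L).length - 1 := distS_le this
    _ = distS G S d + 1 := by simp [hlen]

/-- the first step of a shortest path: edge to a vertex at distance one less -/
lemma distS_step {G : DAG p} {S : Finset (Fin p)} {v : Fin p}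
    (han : G.ancestorOfSet v S) (hpos : 1 ≤ distS G S v) :
    ∃ d, (v, d) ∈ G.edges ∧ G.ancestorOfSet d S ∧ distS G S d + 1 = distS G S v := by
  obtain ⟨L, ⟨hc, h0, s, hs, hlast⟩, hlen⟩ := distS_spec han
  have hL : 2 ≤ L.length := by omega
  have h1 : L[1]? = some L[1] := List.getElem?_eq_getElem (by omega)
  refine ⟨L[1], chain'_getElem? hc h0 h1, ?_, ?_⟩
  · exact an_iff_dPath.2 ⟨L.drop 1, List.IsChain.drop hc 1, by simpa using h1,
      s, hs, by rw [List.getElem?_drop]; convert hlast using 2; simp; omega⟩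
  · have hle : distS G S L[1] ≤ distS G S v - 1 := by
      have : dPath G S L[1] (L.drop 1) := ⟨List.IsChain.drop hc 1, by simpa using h1,
        s, hs, by rw [List.getElem?_drop]; convert hlast using 2; simp; omega⟩
      have := distS_le this
      simp only [List.length_drop] at this
      omega
    have hge := distS_le_succ (chain'_getElem? hc h0 h1)
      (an_iff_dPath.2 ⟨L.drop 1, List.IsChain.drop hc 1, by simpa using h1,
        s, hs, by rw [List.getElem?_drop]; convert hlast using 2; simp; omega⟩)
    omega

end SMRAux

namespace SMRAux
open DAG Relation
variable {p : ℕ}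

lemma activeW_drop {G : DAG p} {S i j l} (h : ActiveW G S i j l) {k : ℕ} {v : Fin p}
    (hk : k + 2 ≤ l.length) (hv : l[k]? = some v) : ActiveW G S v j (l.drop k) := by
  obtain ⟨hc, hlen, h0, hl, hok⟩ := h
  refine ⟨hc.drop k, ?_, ?_, ?_, ?_⟩
  · simp; omega
  · simpa using hv
  · rw [List.getElem?_drop]
    rw [show k + ((l.drop k).length - 1) = l.length - 1 from by simp; omega]
    exact hl
  · intro n a b c ha hb hcc
    rw [List.getElem?_drop] at ha hb hcc
    exact hok _ _ _ _ ha (by rw [show k + n + 1 = k + (n+1) from by omega]; exact hb)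
      (by rw [show k + n + 2 = k + (n+2) from by omega]; exact hcc)

lemma activeW_take {G : DAG p} {S i j l} (h : ActiveW G S i j l) {k : ℕ} {v : Fin p}
    (hk1 : 1 ≤ k) (hk : k < l.length) (hv : l[k]? = some v) :
    ActiveW G S i v (l.take (k+1)) := by
  obtain ⟨hc, hlen, h0, hl, hok⟩ := h
  have hlt : (l.take (k+1)).length = k + 1 := by simp; omega
  refine ⟨hc.take _, by omega, ?_, ?_, ?_⟩
  · rw [List.getElem?_take]; simpa using h0
  · rw [hlt, List.getElem?_take]; simpa using hv
  · intro n a b c ha hb hcc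
    rw [List.getElem?_take] at ha hb hcc
    split at ha; rotate_left; · simp_all
    split at hb; rotate_left; · simp_all
    split at hcc; rotate_left; · simp_all
    exact hok _ _ _ _ ha hb hcc

/-- `getElem?` of the graft `l.take u ++ l.drop v`. -/
lemma graft_getElem? {α : Type*} {l : List α} {u v n : ℕ} (hu : u ≤ l.length) :
    (l.take u ++ l.drop v)[n]? = if n < u then l[n]? else l[n - u + v]? := by
  rw [List.getElem?_append]
  have htl : (l.take u).length = u := by simp; omega
  rw [htl]
  split
  · rw [List.getElem?_take]; simp_all
  · rw [List.getElem?_drop]; congr 1; omega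

lemma graft_length {α : Type*} {l : List α} {u v : ℕ} (hu : u ≤ l.length) (huv : u ≤ v)
    (hvl : v ≤ l.length) :
    (l.take u ++ l.drop v).length = l.length + u - v := by
  rw [List.length_append, List.length_take, List.length_drop, Nat.min_eq_left hu]; omega

lemma activeW_graft {G : DAG p} {S : Finset (Fin p)} {i j : Fin p} {l : List (Fin p)}
    (h : ActiveW G S i j l) {u v : ℕ} (h1 : 1 ≤ u) (huv : u ≤ v) (hv : v + 1 ≤ l.length)
    {a b : Fin p} (ha : l[u-1]? = some a) (hb : l[v]? = some b)
    (hadj : G.adj a b)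
    (hok1 : ∀ x, 2 ≤ u → l[u-2]? = some x → ok G S x a b)
    (hok2 : ∀ y, l[v+1]? = some y → ok G S a b y) :
    ActiveW G S i j (l.take u ++ l.drop v) := by
  obtain ⟨hc, hlen, h0, hl, hok⟩ := h
  have hu : u ≤ l.length := by omega
  have hg : ∀ n, (l.take u ++ l.drop v)[n]? = if n < u then l[n]? else l[n - u + v]? :=
    fun n => graft_getElem? hu
  have hL : (l.take u ++ l.drop v).length = l.length + u - v := graft_length hu huv (by omega)
  refine ⟨?_, ?_, ?_, ?_, ?_⟩
  · refine chain'_of_getElem? (fun n x y hx hy => ?_)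
    rw [hg] at hx hy
    split at hx <;> split at hy
    · exact chain'_getElem? hc hx hy
    · have hn : n = u - 1 := by omega
      have hm : n + 1 - u + v = v := by omega
      rw [hn, ha] at hx; rw [hm, hb] at hy
      cases hx; cases hy; exact hadj
    · omega
    · exact chain'_getElem? hc hx
        (by rw [show n + 1 - u + v = n - u + v + 1 from by omega] at hy; exact hy)
  · omega
  · rw [hg]; simp only [if_pos (by omega : (0:ℕ) < u)]; exact h0
  · have hidx : (l.take u ++ l.drop v).length - 1 = l.length + u - v - 1 := by rw [hL]
    rw [hidx, hg, if_neg (by omega),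
      show l.length + u - v - 1 - u + v = l.length - 1 from by omega]
    exact hl
  · intro n x y z hx hy hz
    rw [hg] at hx hy hz
    split at hx <;> split at hy <;> split at hz
    · exact hok _ _ _ _ hx hy hz
    · -- n + 2 = u : triple (x, a, b) with x = l[u-2]
      have h2 : n + 2 = u := by omega
      have : n + 2 - u + v = v := by omega
      rw [this, hb] at hz; cases hz
      have : n + 1 = u - 1 := by omega
      rw [this, ha] at hy; cases hy
      exact hok1 _ (by omega) (by rw [show n = u - 2 from by omega] at hx; exact hx)
    · omega
    · -- n + 1 = u : triple (a, b, y)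
      have h2 : n + 1 = u := by omega
      rw [show n = u - 1 from by omega, ha] at hx; cases hx
      rw [show n + 1 - u + v = v from by omega, hb] at hy; cases hy
      exact hok2 _ (by rw [show n + 2 - u + v = v + 1 from by omega] at hz; exact hz)
    · omega
    · omega
    · omega
    · -- all in the dropped part
      refine hok _ _ _ _ hx ?_ ?_
      · rw [show n + 1 - u + v = n - u + v + 1 from by omega] at hy; exact hy
      · rw [show n + 2 - u + v = n - u + v + 2 from by omega] at hz; exact hz

lemma activeW_set {G : DAG p} {S : Finset (Fin p)} {i j : Fin p} {l : List (Fin p)}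
    (h : ActiveW G S i j l) {k : ℕ} (hk1 : 1 ≤ k) (hk : k + 2 ≤ l.length)
    {d a c : Fin p} (ha : l[k-1]? = some a) (hc : l[k+1]? = some c)
    (hadj1 : G.adj a d) (hadj2 : G.adj d c)
    (hok1 : ∀ x, 2 ≤ k → l[k-2]? = some x → ok G S x a d)
    (hokm : ok G S a d c)
    (hok2 : ∀ y, l[k+2]? = some y → ok G S d c y) :
    ActiveW G S i j (l.set k d) := by
  obtain ⟨hch, hlen, h0, hl, hok⟩ := h
  have hg : ∀ n, (l.set k d)[n]? = if k = n then some d else l[n]? := by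
    intro n
    rw [List.getElem?_set]
    split
    · rw [if_pos (by omega)]
    · rfl
  refine ⟨?_, by simp; omega, ?_, ?_, ?_⟩
  · refine chain'_of_getElem? (fun n x y hx hy => ?_)
    rw [hg] at hx hy
    split at hx <;> split at hy
    · omega
    · -- n = k: (d, l[k+1]) = (d, c)
      cases hx
      rw [show n + 1 = k + 1 from by omega, hc] at hy; cases hy; exact hadj2
    · -- n + 1 = k: (l[k-1], d) = (a, d)
      cases hy
      rw [show n = k - 1 from by omega, ha] at hx; cases hx; exact hadj1
    · exact chain'_getElem? hch hx hy
  · rw [hg, if_neg (by omega)]; exact h0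
  · rw [hg, List.length_set, if_neg (by omega)]; exact hl
  · intro n x y z hx hy hz
    rw [hg] at hx hy hz
    by_cases e1 : k = n
    · -- (d, c, z-old)
      rw [if_pos e1] at hx; cases hx
      rw [if_neg (by omega)] at hy hz
      rw [show n + 1 = k + 1 from by omega, hc] at hy; cases hy
      exact hok2 _ (by rw [show n + 2 = k + 2 from by omega] at hz; exact hz)
    · by_cases e2 : k = n + 1
      · rw [if_pos e2] at hy; cases hy
        rw [if_neg (by omega)] at hx hz
        rw [show n = k - 1 from by omega, ha] at hx; cases hx
        rw [show n + 2 = k + 1 from by omega, hc] at hz; cases hz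
        exact hokm
      · by_cases e3 : k = n + 2
        · rw [if_pos e3] at hz; cases hz
          rw [if_neg (by omega)] at hx hy
          rw [show n + 1 = k - 1 from by omega, ha] at hy; cases hy
          exact hok1 _ (by omega) (by rw [show n = k - 2 from by omega] at hx; exact hx)
        · rw [if_neg e1] at hx; rw [if_neg e2] at hy; rw [if_neg e3] at hz
          exact hok _ _ _ _ hx hy hz

/-- walking forward along a walk: either we pick up an `An S` certificate at a collider,
or we reach position `e` by a directed path. -/
lemma walk_forward {G : DAG p} {S : Finset (Fin p)} {i j : Fin p} {l : List (Fin p)}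
    (h : ActiveW G S i j l) {e : ℕ} {z : Fin p} (he : l[e]? = some z) :
    ∀ dwn k a b, e - k = dwn + 1 → k + 1 ≤ e → l[k]? = some a → l[k+1]? = some b →
      (a, b) ∈ G.edges →
      G.ancestorOfSet a S ∨ Relation.TransGen G.edgeRel a z := by
  obtain ⟨hc, hlen, h0, hl, hok⟩ := h
  intro dwn
  induction dwn with
  | zero =>
    intro k a b hd hke hka hkb hab
    have : e = k + 1 := by omega
    subst this
    rw [he] at hkb; cases hkb
    exact Or.inr (Relation.TransGen.single hab)
  | succ m ih =>
    intro k a b hd hke hka hkb hab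
    have hk2 : k + 2 ≤ e := by omega
    have hcc : ∃ c, l[k+2]? = some c :=
      ⟨l[k+2]'(by have := lt_len_of_getElem? he; omega), List.getElem?_eq_getElem _⟩
    obtain ⟨c, hcget⟩ := hcc
    by_cases hbc : (b, c) ∈ G.edges
    · rcases ih (k+1) b c (by omega) (by omega) hkb (by rw [show k + 1 + 1 = k + 2 from by omega]; exact hcget) hbc with
        hAn | htg
      · exact Or.inl (an_mono G hab hAn)
      · exact Or.inr (Relation.TransGen.head hab htg)
    · have hcb : (c, b) ∈ G.edges := by
        rcases chain'_getElem? hc hkb (by rw [show k + 1 + 1 = k + 2 from by omega]; exact hcget) with h' | h'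
        · exact absurd h' hbc
        · exact h'
      have hcol : G.isCollider a b c := ⟨hab, hcb⟩
      have := (hok k a b c hka hkb (by rw [show k + 1 + 1 = k + 2 from by omega]; exact hcget)).1 hcol
      exact Or.inl (an_mono G hab this)

/-- secondary measure: total distance-to-`S` over the entries of the walk -/
noncomputable def mu2 (G : DAG p) (S : Finset (Fin p)) (l : List (Fin p)) : ℕ :=
  (l.map (distS G S)).sum

lemma mu2_set_lt {G : DAG p} {S : Finset (Fin p)} {l : List (Fin p)} {k : ℕ} {d b : Fin p}
    (hb : l[k]? = some b) (hlt : distS G S d < distS G S b) :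
    mu2 G S (l.set k d) < mu2 G S l := by
  have hk : k < l.length := lt_len_of_getElem? hb
  have hbval : l[k] = b := by
    rw [List.getElem?_eq_some_iff] at hb; exact hb.2
  have hset : l.set k d = l.take k ++ d :: l.drop (k+1) :=
    List.set_eq_take_cons_drop d hk
  have horig : l = l.take k ++ b :: l.drop (k+1) := by
    conv_lhs => rw [← List.take_append_drop k l, List.drop_eq_getElem_cons hk, hbval]
  unfold mu2
  rw [hset]
  conv_rhs => rw [horig]
  simp only [List.map_append, List.map_cons, List.sum_append, List.sum_cons]
  omega

end SMRAux

namespace SMRAux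
open DAG Relation
variable {p : ℕ}

/-- the parent set of a vertex -/
def paSet (H : DAG p) (v : Fin p) : Finset (Fin p) :=
  Finset.univ.filter (fun w => (w, v) ∈ H.edges)

lemma mem_paSet {H : DAG p} {v w : Fin p} : w ∈ paSet H v ↔ (w, v) ∈ H.edges := by
  simp [paSet]

/-- Lemma A: non-adjacent vertices (one not an ancestor of the other) are
d-separated by the parents of the non-ancestor. -/
lemma lemmaA (H : DAG p) {i j : Fin p} (hne : i ≠ j) (hnadj : ¬ H.adj i j)
    (hnd : ¬ Relation.TransGen H.edgeRel i j) : H.dSep i j (paSet H i) := by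
  refine ⟨hne, ?_⟩
  rw [dConnected_iff_activeW]
  rintro ⟨l, -, hA⟩
  obtain ⟨hc, hlen, h0, hl, hok⟩ := hA
  have hb : ∃ b, l[1]? = some b := ⟨l[1]'(by omega), List.getElem?_eq_getElem _⟩
  obtain ⟨b, hb⟩ := hb
  rcases chain'_getElem? hc h0 hb with hib | hbi
  · -- forward first edge: walk forward
    rcases walk_forward ⟨hc, hlen, h0, hl, hok⟩ hl (l.length - 2) 0 i b (by omega) (by omega)
        h0 hb hib with hAn | htg
    · obtain ⟨s, hs, hrtg⟩ := hAn
      exact not_tg_self H i (Relation.TransGen.tail' hrtg (mem_paSet.1 hs))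
    · exact hnd htg
  · -- first edge points back into i: b is a parent of i
    rcases eq_or_lt_of_le hlen with hlen2 | hlen3
    · -- length 2: i and j adjacent
      have : l[1]? = some j := by
        rw [show (1:ℕ) = l.length - 1 from by omega]; exact hl
      rw [this] at hb; cases hb
      exact hnadj (Or.inr hbi)
    · have hcx : ∃ c, l[2]? = some c := ⟨l[2]'(by omega), List.getElem?_eq_getElem _⟩
      obtain ⟨c, hcx⟩ := hcx
      have hnc : ¬ H.isCollider i b c := fun hcol => edge_asymm H hbi hcol.1
      have := (hok 0 i b c h0 hb hcx).2 hnc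
      exact this (mem_paSet.2 hbi)

/-- a separating set avoiding both endpoints exists for any non-adjacent pair -/
lemma exists_sep (H : DAG p) {a b : Fin p} (hne : a ≠ b) (hnadj : ¬ H.adj a b) :
    ∃ S, (H.dSep a b S ∨ H.dSep b a S) ∧ a ∉ S ∧ b ∉ S := by
  by_cases htg : Relation.TransGen H.edgeRel a b
  · have htg' : ¬ Relation.TransGen H.edgeRel b a := fun h => not_tg_self H a (htg.trans h)
    refine ⟨paSet H b, Or.inr (lemmaA H hne.symm (fun h => hnadj (adj_symm H h)) htg'), ?_, ?_⟩
    · exact fun h => hnadj (Or.inl (mem_paSet.1 h))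
    · exact fun h => edge_irrefl H b (mem_paSet.1 h)
  · refine ⟨paSet H a, Or.inl (lemmaA H hne hnadj htg), ?_, ?_⟩
    · exact fun h => edge_irrefl H a (mem_paSet.1 h)
    · exact fun h => hnadj (Or.inr (mem_paSet.1 h))

end SMRAux

namespace SMRAux
open DAG Relation
variable {p : ℕ}

lemma an_of_dPath_at {G : DAG p} {S : Finset (Fin p)} {v : Fin p} {L : List (Fin p)}
    (h : dPath G S v L) {t : ℕ} {x : Fin p} (ht : L[t]? = some x) : G.ancestorOfSet x S := by
  obtain ⟨hc, h0, s, hs, hlast⟩ := h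
  exact ⟨s, hs, rtg_of_chain' hc ht hlast (by have := lt_len_of_getElem? ht; omega)⟩

/-- transferring an `An(S)` certificate from `G` to `G'` -/
lemma an_transfer {G G' : DAG p} {S : Finset (Fin p)}
    (Hadj : ∀ a b, G.adj a b ↔ G'.adj a b)
    (Hvs : ∀ a b c, a ≠ c → ¬ G.adj a c → G.adj a b → G.adj b c →
      (G.isCollider a b c ↔ G'.isCollider a b c))
    {b : Fin p} (hb : G.ancestorOfSet b S)
    (hfirst : ∀ d, (b, d) ∈ G.edges → G.ancestorOfSet d S →
      distS G S d + 1 = distS G S b → (b, d) ∈ G'.edges) :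
    G'.ancestorOfSet b S := by
  obtain ⟨L, hL, hlen⟩ := distS_spec hb
  have key : ∀ t x y, L[t]? = some x → L[t+1]? = some y → (x, y) ∈ G'.edges := by
    intro t
    induction t with
    | zero =>
      intro x y hx hy
      have hbx : x = b := by
        rw [hL.2.1] at hx; exact Option.some_injective _ hx.symm
      subst hbx
      have hedge : (x, y) ∈ G.edges := chain'_getElem? hL.1 hL.2.1 hy
      have hdrop : dPath G S y (L.drop 1) := by
        obtain ⟨hc, h0, s, hs, hlast⟩ := hL
        refine ⟨hc.drop 1, by rw [List.getElem?_drop]; exact hy, s, hs, ?_⟩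
        rw [List.getElem?_drop]
        rw [show 1 + ((L.drop 1).length - 1) = L.length - 1 from by
          simp; have := lt_len_of_getElem? hy; omega]
        exact hlast
      have han1 : G.ancestorOfSet y S := an_iff_dPath.2 ⟨_, hdrop⟩
      have hd1 : distS G S y + 1 = distS G S x := by
        have hle := distS_le hdrop
        simp only [List.length_drop] at hle
        have hge := distS_le_succ hedge han1
        have := lt_len_of_getElem? hy
        omega
      exact hfirst _ hedge han1 hd1
    | succ t ih =>
      intro y z hy hz
      have hxe : ∃ x, L[t]? = some x :=
        ⟨L[t]'(by have := lt_len_of_getElem? hy; omega), List.getElem?_eq_getElem _⟩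
      obtain ⟨x, hx⟩ := hxe
      have hprev : (x, y) ∈ G'.edges := ih x y hx hy
      have hz' : L[t+2]? = some z := by
        rw [show t + 2 = t + 1 + 1 from by omega]; exact hz
      have hxy : (x, y) ∈ G.edges := chain'_getElem? hL.1 hx hy
      have hyz : (y, z) ∈ G.edges := chain'_getElem? hL.1 hy hz
      by_contra hnot
      have hzy : (z, y) ∈ G'.edges := by
        rcases (Hadj y z).1 (Or.inl hyz) with h | h
        · exact absurd h hnot
        · exact h
      have hxz : x ≠ z := fun he => edge_asymm G hxy (he ▸ hyz)
      have hadjxz : G.adj x z := by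
        by_contra hnadj
        have hGcol : ¬ G.isCollider x y z := fun hc => edge_asymm G hyz hc.2
        exact hGcol ((Hvs x y z hxz hnadj (Or.inl hxy) (Or.inl hyz)).2 ⟨hprev, hzy⟩)
      have hxz' : (x, z) ∈ G.edges := by
        rcases hadjxz with h | h
        · exact h
        · exact (no_cycle3 G hxy hyz h).elim
      -- shortcut the shortest path: contradiction
      have hzlen := lt_len_of_getElem? hz'
      have hshort : dPath G S b (L.take (t+1) ++ L.drop (t+2)) := by
        obtain ⟨hc, h0, s, hs, hlast⟩ := hL
        have hu : t + 1 ≤ L.length := by omega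
        have hgg : ∀ n, (L.take (t+1) ++ L.drop (t+2))[n]? =
            if n < t + 1 then L[n]? else L[n - (t+1) + (t+2)]? :=
          fun n => graft_getElem? hu
        refine ⟨?_, ?_, s, hs, ?_⟩
        · refine chain'_of_getElem? (fun n u v hu' hv' => ?_)
          rw [hgg] at hu' hv'
          split at hu' <;> split at hv'
          · exact chain'_getElem? hc hu' hv'
          · rw [show n = t from by omega, hx] at hu'; cases hu'
            rw [show n + 1 - (t+1) + (t+2) = t + 2 from by omega, hz'] at hv'; cases hv'
            exact hxz'
          · omega
          · rw [show n + 1 - (t+1) + (t+2) = n - (t+1) + (t+2) + 1 from by omega] at hv'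
            exact chain'_getElem? hc hu' hv'
        · rw [hgg, if_pos (by omega)]; exact h0
        · have hlen2 : (L.take (t+1) ++ L.drop (t+2)).length = L.length - 1 := by
            rw [graft_length hu (by omega) (by omega)]; omega
          rw [hlen2, hgg, if_neg (by omega),
            show L.length - 1 - 1 - (t+1) + (t+2) = L.length - 1 from by omega]
          exact hlast
      have hcontr := distS_le hshort
      rw [graft_length (by omega) (by omega) (by omega)] at hcontr
      omega
  -- assemble a G'-path
  refine an_iff_dPath.2 ⟨L, ?_, hL.2.1, hL.2.2⟩
  refine chain'_of_getElem? (fun n u v hu' hv' => ?_)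
  exact key n u v hu' hv'

end SMRAux

namespace SMRAux
open DAG Relation
variable {p : ℕ}

lemma getElem?_exists {α : Type*} {l : List α} {m : ℕ} (h : m < l.length) :
    ∃ x, l[m]? = some x := ⟨l[m]'h, List.getElem?_eq_getElem h⟩

lemma some_inj' {α : Type*} {a b : α} (h : some a = some b) : a = b :=
  Option.some_injective _ h

/-- The main transfer lemma: if `G` and `G'` have the same skeleton and the same
unshielded colliders, every active walk in `G` yields d-connection in `G'`. -/
lemma main_transfer {G G' : DAG p} {S : Finset (Fin p)}
    (Hadj : ∀ a b, G.adj a b ↔ G'.adj a b)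
    (Hvs : ∀ a b c, a ≠ c → ¬ G.adj a c → G.adj a b → G.adj b c →
      (G.isCollider a b c ↔ G'.isCollider a b c)) :
    ∀ (N M : ℕ) (l : List (Fin p)) (i j : Fin p), i ≠ j → l.length = N → mu2 G S l = M →
      ActiveW G S i j l → G'.dConnected i j S := by
  intro N
  induction N using Nat.strong_induction_on with
  | _ N IHN =>
  intro M
  induction M using Nat.strong_induction_on with
  | _ M IHM =>
  intro l i j hij hN hM hA
  obtain ⟨hch, hlen, h0, hlast, hok⟩ := hA
  have hA' : ActiveW G S i j l := ⟨hch, hlen, h0, hlast, hok⟩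
  -- ==================== CASE 1 : repeated vertex ====================
  by_cases hnd : l.Nodup
  rotate_left
  · rw [List.nodup_iff_getElem?_ne_getElem?] at hnd
    push_neg at hnd
    obtain ⟨k1, k2, hk12, hk2len, heq⟩ := hnd
    obtain ⟨v, hv1⟩ := getElem?_exists (l := l) (m := k1) (by omega)
    have hv2 : l[k2]? = some v := by rw [← heq]; exact hv1
    by_cases hk10 : k1 = 0
    · -- the repeated vertex is the start
      subst hk10
      have hvi : v = i := some_inj' (by rw [← hv1, h0])
      subst hvi
      have hk2' : k2 + 2 ≤ l.length := by
        rcases Nat.lt_or_ge (k2 + 2) (l.length + 1) with h | h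
        · omega
        · exfalso
          have hk2e : k2 = l.length - 1 := by omega
          have hlj : l[k2]? = some j := by rw [hk2e]; exact hlast
          rw [hlj] at hv2
          exact hij (some_inj' hv2.symm)
      have hdrop := activeW_drop hA' hk2' hv2
      exact IHN (l.drop k2).length (by simp; omega) (mu2 G S (l.drop k2)) _ v j hij rfl rfl hdrop
    · by_cases hk2last : k2 = l.length - 1
      · -- the repeated vertex is the end
        have hvj : v = j := by
          have hlj : l[k2]? = some j := by rw [hk2last]; exact hlast
          rw [hlj] at hv2
          exact some_inj' hv2.symm
        subst hvj
        have htake := activeW_take hA' (k := k1) (by omega) (by omega) hv1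
        refine IHN (l.take (k1+1)).length ?_ (mu2 G S (l.take (k1+1))) _ i v hij rfl rfl htake
        simp; omega
      · -- interior cut : graft u = k1+1, v = k2+1
        have hk2len2 : k2 + 2 ≤ l.length := by omega
        have hk11 : 1 ≤ k1 := by omega
        obtain ⟨b2, hb2⟩ := getElem?_exists (l := l) (m := k2 + 1) (by omega)
        obtain ⟨w1, hw1⟩ := getElem?_exists (l := l) (m := k1 + 1) (by omega)
        obtain ⟨w2, hw2⟩ := getElem?_exists (l := l) (m := k2 - 1) (by omega)
        have hv2' : l[(k2-1)+1]? = some v := by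
          rw [show k2 - 1 + 1 = k2 from by omega]; exact hv2
        have hb2' : l[(k2-1)+2]? = some b2 := by
          rw [show k2 - 1 + 2 = k2 + 1 from by omega]; exact hb2
        have hg := activeW_graft hA' (u := k1 + 1) (v := k2 + 1) (by omega) (by omega)
          (by omega) (a := v) (b := b2) (by simpa using hv1) hb2
          (chain'_getElem? hch hv2 hb2)
          (by
            -- junction triple (x, v, b2)
            intro x hu hx
            have hx' : l[k1-1]? = some x := by
              rw [show k1 + 1 - 2 = k1 - 1 from by omega] at hx; exact hx
            have hv1' : l[(k1-1)+1]? = some v := by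
              rw [show k1 - 1 + 1 = k1 from by omega]; exact hv1
            have hw1' : l[(k1-1)+2]? = some w1 := by
              rw [show k1 - 1 + 2 = k1 + 1 from by omega]; exact hw1
            constructor
            · rintro ⟨hxv, hb2v⟩
              by_cases h1c : G.isCollider x v w1
              · exact (hok (k1-1) x v w1 hx' hv1' hw1').1 h1c
              · by_cases h2c : G.isCollider w2 v b2
                · exact (hok (k2-1) w2 v b2 hw2 hv2' hb2').1 h2c
                · -- both occurrences non-colliders: loop argument
                  have hvw1 : (v, w1) ∈ G.edges := by
                    rcases chain'_getElem? hch hv1 hw1 with h | h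
                    · exact h
                    · exact absurd ⟨hxv, h⟩ h1c
                  rcases walk_forward hA' hv2 (k2 - k1 - 1) k1 v w1 (by omega) (by omega)
                      hv1 hw1 hvw1 with hAn | htg
                  · exact hAn
                  · exact (not_tg_self G v htg).elim
            · intro hncol
              by_cases hxv : (x, v) ∈ G.edges
              · have h2c : ¬ G.isCollider w2 v b2 := fun hcc => hncol ⟨hxv, hcc.2⟩
                exact (hok (k2-1) w2 v b2 hw2 hv2' hb2').2 h2c
              · have h1c : ¬ G.isCollider x v w1 := fun hcc => hxv hcc.1
                exact (hok (k1-1) x v w1 hx' hv1' hw1').2 h1c)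
          (by
            -- triple (v, b2, y) = old triple at k2
            intro y hy
            exact hok k2 v b2 y hv2 hb2 hy)
        refine IHN (l.take (k1+1) ++ l.drop (k2+1)).length ?_ _ _ i j hij rfl rfl hg
        rw [graft_length (by omega) (by omega) (by omega)]
        omega
  -- ==================== CASE 2 : shielded collider ====================
  by_cases hp2 : ∃ n a b c, l[n]? = some a ∧ l[n+1]? = some b ∧ l[n+2]? = some c ∧
      G.isCollider a b c ∧ G.adj a c
  · obtain ⟨n, a, b, c, ha, hb, hc, hcol, hshield⟩ := hp2
    have hAnb : G.ancestorOfSet b S := (hok n a b c ha hb hc).1 hcol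
    have hg := activeW_graft hA' (u := n + 1) (v := n + 2) (by omega) (by omega)
      (lt_len_of_getElem? hc) (a := a) (b := c) (by simpa using ha) hc hshield
      (by
        intro x hu hx
        have hx' : l[n-1]? = some x := by
          rw [show n + 1 - 2 = n - 1 from by omega] at hx; exact hx
        have ha' : l[(n-1)+1]? = some a := by
          rw [show n - 1 + 1 = n from by omega]; exact ha
        have hb' : l[(n-1)+2]? = some b := by
          rw [show n - 1 + 2 = n + 1 from by omega]; exact hb
        have haS : a ∉ S := (hok (n-1) x a b hx' ha' hb').2
          (fun hcc => edge_asymm G hcol.1 hcc.2)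
        exact ⟨fun _ => an_mono G hcol.1 hAnb, fun _ => haS⟩)
      (by
        intro y hy
        have hy' : l[(n+1)+2]? = some y := by
          rw [show n + 1 + 2 = n + 2 + 1 from by omega]; exact hy
        have hcS : c ∉ S := (hok (n+1) b c y hb hc hy').2
          (fun hcc => edge_asymm G hcol.2 hcc.1)
        exact ⟨fun _ => an_mono G hcol.2 hAnb, fun _ => hcS⟩)
    refine IHN (l.take (n+1) ++ l.drop (n+2)).length ?_ _ _ i j hij rfl rfl hg
    have := lt_len_of_getElem? hc
    rw [graft_length (by omega) (by omega) (by omega)]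
    omega
  -- ==================== CASE 3 : reversed first descendant edge ====================
  by_cases hp3 : ∃ n a b c, l[n]? = some a ∧ l[n+1]? = some b ∧ l[n+2]? = some c ∧
      G.isCollider a b c ∧ b ∉ S ∧ ∃ d, (b, d) ∈ G.edges ∧ G.ancestorOfSet d S ∧
      distS G S d + 1 = distS G S b ∧ (d, b) ∈ G'.edges
  · obtain ⟨n, a, b, c, ha, hb, hc, hcol, hbS, d, hbd, hdAn, hdist, hdb'⟩ := hp3
    have hac : a ≠ c := nodup_ne l hnd ha hc (by omega)
    have hnadj : ¬ G.adj a c := fun h => hp2 ⟨n, a, b, c, ha, hb, hc, hcol, h⟩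
    have hcol' : G'.isCollider a b c :=
      (Hvs a b c hac hnadj (Or.inl hcol.1) (Or.inr hcol.2)).1 hcol
    have hda : d ≠ a := by rintro rfl; exact edge_asymm G hcol.1 hbd
    have hdc : d ≠ c := by rintro rfl; exact edge_asymm G hbd hcol.2
    have had : (a, d) ∈ G.edges := by
      have hadj_ad : G.adj a d := by
        by_contra hno
        have := (Hvs a b d (Ne.symm hda) hno (Or.inl hcol.1) (Or.inl hbd)).2 ⟨hcol'.1, hdb'⟩
        exact edge_asymm G hbd this.2
      rcases hadj_ad with h | h
      · exact h
      · exact (no_cycle3 G hcol.1 hbd h).elim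
    have hcd : (c, d) ∈ G.edges := by
      have hadj_cd : G.adj c d := by
        by_contra hno
        have := (Hvs c b d (Ne.symm hdc) hno (Or.inl hcol.2) (Or.inl hbd)).2 ⟨hcol'.2, hdb'⟩
        exact edge_asymm G hbd this.2
      rcases hadj_cd with h | h
      · exact h
      · exact (no_cycle3 G hcol.2 hbd h).elim
    have hset := activeW_set hA' (k := n + 1) (by omega)
      (by have := lt_len_of_getElem? hc; omega) (d := d) (a := a) (c := c)
      (by rw [show n + 1 - 1 = n from by omega]; exact ha)
      (by rw [show n + 1 + 1 = n + 2 from by omega]; exact hc)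
      (Or.inl had) (Or.inr hcd)
      (by
        intro x hu hx
        have hx' : l[n-1]? = some x := by
          rw [show n + 1 - 2 = n - 1 from by omega] at hx; exact hx
        have ha' : l[(n-1)+1]? = some a := by
          rw [show n - 1 + 1 = n from by omega]; exact ha
        have hb' : l[(n-1)+2]? = some b := by
          rw [show n - 1 + 2 = n + 1 from by omega]; exact hb
        have haS : a ∉ S := (hok (n-1) x a b hx' ha' hb').2
          (fun hcc => edge_asymm G hcol.1 hcc.2)
        exact ⟨fun hcc => (edge_asymm G had hcc.2).elim, fun _ => haS⟩)
      (⟨fun _ => hdAn, fun hnc => (hnc ⟨had, hcd⟩).elim⟩)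
      (by
        intro y hy
        have hy' : l[(n+1)+2]? = some y := by
          rw [show n + 1 + 2 = n + 2 + 1 from by omega]
          rw [show n + 1 + 2 = n + 2 + 1 from by omega] at hy; exact hy
        have hcS : c ∉ S := (hok (n+1) b c y hb hc hy').2
          (fun hcc => edge_asymm G hcol.2 hcc.1)
        exact ⟨fun hcc => (edge_asymm G hcd hcc.1).elim, fun _ => hcS⟩)
    refine IHM (mu2 G S (l.set (n+1) d)) ?_ _ i j hij ?_ rfl hset
    · rw [← hM]
      exact mu2_set_lt hb (by omega)
    · rw [← hN, List.length_set]
  -- ==================== CASE 4 : G-noncollider that is a G'-collider ====================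
  by_cases hp4 : ∃ n a b c, l[n]? = some a ∧ l[n+1]? = some b ∧ l[n+2]? = some c ∧
      ¬ G.isCollider a b c ∧ G'.isCollider a b c
  · obtain ⟨n, a, b, c, ha, hb, hc, hncol, hcol'⟩ := hp4
    have hac : a ≠ c := nodup_ne l hnd ha hc (by omega)
    have hadjab : G.adj a b := chain'_getElem? hch ha hb
    have hadjbc : G.adj b c := chain'_getElem? hch hb hc
    have hadjac : G.adj a c := by
      by_contra hno
      exact hncol ((Hvs a b c hac hno hadjab hadjbc).2 hcol')
    have hbS : b ∉ S := (hok n a b c ha hb hc).2 hncol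
    have hclen := lt_len_of_getElem? hc
    -- generic recursion for a one-vertex deletion at position n+1
    have recurse1 : ActiveW G S i j (l.take (n+1) ++ l.drop (n+2)) → G'.dConnected i j S := by
      intro hg
      refine IHN (l.take (n+1) ++ l.drop (n+2)).length ?_ _ _ i j hij rfl rfl hg
      rw [graft_length (by omega) (by omega) (by omega)]; omega
    rcases hadjab with hab | hba <;> rcases hadjbc with hbc | hcb
    · -- (A) a→b→c : shield must be a→c
      have hacE : (a, c) ∈ G.edges := by
        rcases hadjac with h | h
        · exact h
        · exact (no_cycle3 G hab hbc h).elim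
      refine recurse1 (activeW_graft hA' (u := n+1) (v := n+2) (by omega) (by omega)
        (by omega) (a := a) (b := c) (by simpa using ha) hc (Or.inl hacE) ?_ ?_)
      · intro x hu hx
        have hx' : l[n-1]? = some x := by
          rw [show n + 1 - 2 = n - 1 from by omega] at hx; exact hx
        have ha' : l[(n-1)+1]? = some a := by
          rw [show n - 1 + 1 = n from by omega]; exact ha
        have hb' : l[(n-1)+2]? = some b := by
          rw [show n - 1 + 2 = n + 1 from by omega]; exact hb
        have haS : a ∉ S := (hok (n-1) x a b hx' ha' hb').2
          (fun hcc => edge_asymm G hab hcc.2)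
        exact ⟨fun hcc => (edge_asymm G hacE hcc.2).elim, fun _ => haS⟩
      · intro y hy
        have hy' : l[(n+1)+2]? = some y := by
          rw [show n + 1 + 2 = n + 2 + 1 from by omega]
          rw [show n + 1 + 2 = n + 2 + 1 from by omega] at hy; exact hy
        have hold := hok (n+1) b c y hb hc hy'
        constructor
        · rintro ⟨-, hyc⟩
          exact hold.1 ⟨hbc, hyc⟩
        · intro hnc
          exact hold.2 (fun hcc => hnc ⟨hacE, hcc.2⟩)
    · -- (B) a→b←c : G-collider, contradiction
      exact (hncol ⟨hab, hcb⟩).elim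
    · -- (C) fork b→a, b→c
      rcases hadjac with hacE | hcaE
      · -- (C1) shield a→c
        by_cases hbad : ∃ x, 1 ≤ n ∧ l[n-1]? = some x ∧ (x, a) ∈ G.edges ∧ a ∈ S
        · -- delete a instead, using the shield x—b
          obtain ⟨x, hn1, hx, hxa, haS⟩ := hbad
          have hxb : x ≠ b := nodup_ne l hnd hx hb (by omega)
          have hadjxb : G.adj x b := by
            by_contra hno
            have := (Hvs x a b hxb hno (Or.inl hxa) (Or.inr hba)).1 ⟨hxa, hba⟩
            exact edge_asymm G' hcol'.1 this.2
          have ha2 : l[(n-1)+1]? = some a := by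
            rw [show n - 1 + 1 = n from by omega]; exact ha
          have hb2 : l[(n-1)+2]? = some b := by
            rw [show n - 1 + 2 = n + 1 from by omega]; exact hb
          have hg := activeW_graft hA' (u := n) (v := n + 1) (by omega) (by omega)
            (by omega) (a := x) (b := b) (by rw [show n - 1 = n - 1 from rfl]; exact hx) hb
            hadjxb
            (by
              intro w hu hw
              have hw' : l[n-2]? = some w := hw
              have hx3 : l[(n-2)+1]? = some x := by
                rw [show n - 2 + 1 = n - 1 from by omega]; exact hx
              have ha3 : l[(n-2)+2]? = some a := by
                rw [show n - 2 + 2 = n from by omega]; exact ha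
              have hxS : x ∉ S := (hok (n-2) w x a hw' hx3 ha3).2
                (fun hcc => edge_asymm G hxa hcc.2)
              exact ⟨fun _ => an_mono G hxa (an_of_mem G haS), fun _ => hxS⟩)
            (by
              intro y hy
              have hyc : y = c := by
                rw [show n + 1 + 1 = n + 2 from by omega] at hy
                rw [hy] at hc; exact some_inj' hc
              subst hyc
              exact ⟨fun hcc => (edge_asymm G hbc hcc.2).elim, fun _ => hbS⟩)
          refine IHN (l.take n ++ l.drop (n+1)).length ?_ _ _ i j hij rfl rfl hg
          rw [graft_length (by omega) (by omega) (by omega)]; omega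
        · -- delete b
          refine recurse1 (activeW_graft hA' (u := n+1) (v := n+2) (by omega) (by omega)
            (by omega) (a := a) (b := c) (by simpa using ha) hc (Or.inl hacE) ?_ ?_)
          · intro x hu hx
            have hx' : l[n-1]? = some x := by
              rw [show n + 1 - 2 = n - 1 from by omega] at hx; exact hx
            have ha' : l[(n-1)+1]? = some a := by
              rw [show n - 1 + 1 = n from by omega]; exact ha
            have hb' : l[(n-1)+2]? = some b := by
              rw [show n - 1 + 2 = n + 1 from by omega]; exact hb
            have haS : a ∉ S := by
              by_cases hxa : (x, a) ∈ G.edges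
              · intro haS
                exact hbad ⟨x, by omega, hx', hxa, haS⟩
              · exact (hok (n-1) x a b hx' ha' hb').2 (fun hcc => hxa hcc.1)
            exact ⟨fun hcc => (edge_asymm G hacE hcc.2).elim, fun _ => haS⟩
          · intro y hy
            have hy' : l[(n+1)+2]? = some y := by
              rw [show n + 1 + 2 = n + 2 + 1 from by omega]
              rw [show n + 1 + 2 = n + 2 + 1 from by omega] at hy; exact hy
            have hold := hok (n+1) b c y hb hc hy'
            constructor
            · rintro ⟨-, hyc⟩
              exact hold.1 ⟨hbc, hyc⟩
            · intro hnc
              exact hold.2 (fun hcc => hnc ⟨hacE, hcc.2⟩)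
      · -- (C2) shield c→a
        by_cases hbad : ∃ y, l[n+3]? = some y ∧ (y, c) ∈ G.edges ∧ c ∈ S
        · -- delete c instead, using the shield b—y
          obtain ⟨y, hy, hyc, hcS⟩ := hbad
          have hby : b ≠ y := nodup_ne l hnd hb hy (by omega)
          have hadjby : G.adj b y := by
            by_contra hno
            have := (Hvs b c y hby hno (Or.inl hbc) (Or.inr hyc)).1 ⟨hbc, hyc⟩
            exact edge_asymm G' hcol'.2 this.1
          have hy4 : l[(n+2)+1]? = some y := by
            rw [show n + 2 + 1 = n + 3 from by omega]; exact hy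
          have hg := activeW_graft hA' (u := n+2) (v := n+3) (by omega) (by omega)
            (by have := lt_len_of_getElem? hy; omega) (a := b) (b := y)
            (by rw [show n + 2 - 1 = n + 1 from by omega]; exact hb) hy hadjby
            (by
              intro w hu hw
              have hwa : w = a := by
                rw [show n + 2 - 2 = n from by omega] at hw
                rw [hw] at ha; exact some_inj' ha
              subst hwa
              exact ⟨fun hcc => (edge_asymm G hba hcc.1).elim, fun _ => hbS⟩)
            (by
              intro z hz
              have hz' : l[(n+2)+2]? = some z := by
                rw [show n + 2 + 2 = n + 3 + 1 from by omega]
                rw [show n + 2 + 2 = n + 3 + 1 from by omega] at hz; exact hz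
              have hyS : y ∉ S := (hok (n+2) c y z hc hy4 hz').2
                (fun hcc => edge_asymm G hyc hcc.1)
              exact ⟨fun _ => an_mono G hyc (an_of_mem G hcS), fun _ => hyS⟩)
          refine IHN (l.take (n+2) ++ l.drop (n+3)).length ?_ _ _ i j hij rfl rfl hg
          rw [graft_length (by omega) (by omega) (by omega)]
          have := lt_len_of_getElem? hy; omega
        · -- delete b
          refine recurse1 (activeW_graft hA' (u := n+1) (v := n+2) (by omega) (by omega)
            (by omega) (a := a) (b := c) (by simpa using ha) hc (Or.inr hcaE) ?_ ?_)
          · intro x hu hx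
            have hx' : l[n-1]? = some x := by
              rw [show n + 1 - 2 = n - 1 from by omega] at hx; exact hx
            have ha' : l[(n-1)+1]? = some a := by
              rw [show n - 1 + 1 = n from by omega]; exact ha
            have hb' : l[(n-1)+2]? = some b := by
              rw [show n - 1 + 2 = n + 1 from by omega]; exact hb
            have hold := hok (n-1) x a b hx' ha' hb'
            constructor
            · rintro ⟨hxa, -⟩
              exact hold.1 ⟨hxa, hba⟩
            · intro hnc
              exact hold.2 (fun hcc => hnc ⟨hcc.1, hcaE⟩)
          · intro y hy
            have hy' : l[(n+1)+2]? = some y := by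
              rw [show n + 1 + 2 = n + 2 + 1 from by omega]
              rw [show n + 1 + 2 = n + 2 + 1 from by omega] at hy; exact hy
            have hold := hok (n+1) b c y hb hc hy'
            have hcS : c ∉ S := by
              by_cases hyc : (y, c) ∈ G.edges
              · intro hcS
                exact hbad ⟨y, by rw [show n + 3 = n + 2 + 1 from by omega]; exact hy', hyc, hcS⟩
              · exact hold.2 (fun hcc => hyc hcc.2)
            exact ⟨fun hcc => (edge_asymm G hcaE hcc.1).elim, fun _ => hcS⟩
    · -- (D) chain backward b→a, c→b : shield must be c→a
      have hcaE : (c, a) ∈ G.edges := by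
        rcases hadjac with h | h
        · exact (no_cycle3 G hcb hba h).elim
        · exact h
      refine recurse1 (activeW_graft hA' (u := n+1) (v := n+2) (by omega) (by omega)
        (by omega) (a := a) (b := c) (by simpa using ha) hc (Or.inr hcaE) ?_ ?_)
      · intro x hu hx
        have hx' : l[n-1]? = some x := by
          rw [show n + 1 - 2 = n - 1 from by omega] at hx; exact hx
        have ha' : l[(n-1)+1]? = some a := by
          rw [show n - 1 + 1 = n from by omega]; exact ha
        have hb' : l[(n-1)+2]? = some b := by
          rw [show n - 1 + 2 = n + 1 from by omega]; exact hb
        have hold := hok (n-1) x a b hx' ha' hb'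
        constructor
        · rintro ⟨hxa, -⟩
          exact hold.1 ⟨hxa, hba⟩
        · intro hnc
          exact hold.2 (fun hcc => hnc ⟨hcc.1, hcaE⟩)
      · intro y hy
        have hy' : l[(n+1)+2]? = some y := by
          rw [show n + 1 + 2 = n + 2 + 1 from by omega]
          rw [show n + 1 + 2 = n + 2 + 1 from by omega] at hy; exact hy
        have hcS : c ∉ S := (hok (n+1) b c y hb hc hy').2
          (fun hcc => edge_asymm G hcb hcc.1)
        exact ⟨fun hcc => (edge_asymm G hcaE hcc.1).elim, fun _ => hcS⟩
  -- ==================== FINAL : direct transfer ====================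
  rw [dConnected_iff_activeW]
  refine ⟨l, hnd, ?_, hlen, h0, hlast, ?_⟩
  · exact chain'_of_getElem? (fun n x y hx hy => (Hadj x y).1 (chain'_getElem? hch hx hy))
  · intro n a b c ha hb hc
    have hokG := hok n a b c ha hb hc
    by_cases hcol : G.isCollider a b c
    · have hac : a ≠ c := nodup_ne l hnd ha hc (by omega)
      have hnadj : ¬ G.adj a c := fun h => hp2 ⟨n, a, b, c, ha, hb, hc, hcol, h⟩
      have hcol' : G'.isCollider a b c :=
        (Hvs a b c hac hnadj (Or.inl hcol.1) (Or.inr hcol.2)).1 hcol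
      constructor
      · intro _
        by_cases hbS : b ∈ S
        · exact an_of_mem G' hbS
        · refine an_transfer Hadj Hvs (hokG.1 hcol) ?_
          intro d hbd hand hdist
          rcases (Hadj b d).1 (Or.inl hbd) with h | h
          · exact h
          · exact (hp3 ⟨n, a, b, c, ha, hb, hc, hcol, hbS, d, hbd, hand, hdist, h⟩).elim
      · intro hnc'
        exact (hnc' hcol').elim
    · constructor
      · intro hcol'
        exact (hp4 ⟨n, a, b, c, ha, hb, hc, hcol, hcol'⟩).elim
      · intro _
        exact hokG.2 hcol

end SMRAux

namespace SMRAux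
open DAG Relation
variable {p : ℕ}

lemma col_symm (H : DAG p) {a b c : Fin p} (h : H.isCollider a b c) : H.isCollider c b a :=
  ⟨h.2, h.1⟩

lemma triple_infix_singleton {α : Type*} {x y z a b c : α}
    (h : [x, y, z] <:+: [a, b, c]) : x = a ∧ y = b ∧ z = c := by
  obtain ⟨n, hx, hy, hz⟩ := triple_infix_iff.1 h
  have hn : n = 0 := by
    have := lt_len_of_getElem? hz
    simp at this; omega
  subst hn
  simp at hx hy hz
  exact ⟨hx.symm, hy.symm, hz.symm⟩

/-- if `a` and `c` are not d-connected given `S`, the trail `a - b - c` is blocked -/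
lemma triple_blocked (H : DAG p) {a b c : Fin p} {S : Finset (Fin p)}
    (hadjab : H.adj a b) (hadjbc : H.adj b c) (hac : a ≠ c)
    (hncon : ¬ H.dConnected a c S) :
    (H.isCollider a b c ∧ ¬ H.ancestorOfSet b S) ∨ (¬ H.isCollider a b c ∧ b ∈ S) := by
  by_contra hno
  push_neg at hno
  apply hncon
  refine ⟨[a, b, c], ⟨?_, ?_, by simp, rfl, rfl⟩, ?_⟩
  · show List.IsChain _ _
    simp [hadjab, hadjbc]
  · simp [List.nodup_cons]
    exact ⟨⟨adj_ne H hadjab, hac⟩, adj_ne H hadjbc⟩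
  · intro x y z hinf
    obtain ⟨rfl, rfl, rfl⟩ := triple_infix_singleton hinf
    exact ⟨fun hcol => hno.1 hcol, fun hncol => hno.2 hncol⟩

/-- d-connection transfers between graphs with the same skeleton and
unshielded colliders -/
lemma dconn_transfer {G G' : DAG p} {S : Finset (Fin p)} {i j : Fin p}
    (Hadj : ∀ a b, G.adj a b ↔ G'.adj a b)
    (Hvs : ∀ a b c, a ≠ c → ¬ G.adj a c → G.adj a b → G.adj b c →
      (G.isCollider a b c ↔ G'.isCollider a b c))
    (h : G.dConnected i j S) : G'.dConnected i j S := by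
  rw [dConnected_iff_activeW] at h
  obtain ⟨l, hnd, hA⟩ := h
  have hij : i ≠ j := by
    obtain ⟨-, hlen, h0, hlast, -⟩ := hA
    exact nodup_ne l hnd h0 hlast (by omega)
  exact main_transfer Hadj Hvs l.length (mu2 G S l) l i j hij rfl rfl hA

end SMRAux


/-- Restricted faithfulness (adjacency- plus orientation-faithfulness) together with
the Markov assumption implies the sparsest Markov representation assumption: any DAG
Markov w.r.t. the CI model that is not Markov equivalent to `G` has strictly more
edges than `G`. -/
theorem restrictedFaithful_implies_SMR (CI : CIModel p) (G : DAG p)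
    (hMarkov : Markov G CI) (hAF : AdjFaithful G CI) (hOF : OrientFaithful G CI) :
    ∀ G' : DAG p, Markov G' CI → ¬ MarkovEquiv G' G →
      G.edges.card < G'.edges.card := by
  intro G' hM' hNE
  by_contra hcard
  push_neg at hcard
  apply hNE
  -- Step A : each G-edge is a G'-adjacency
  have edgeAdj : ∀ a b : Fin p, (a, b) ∈ G.edges → G'.adj a b := by
    intro a b he
    by_contra hno
    have hab : a ≠ b := by rintro rfl; exact SMRAux.edge_irrefl G a he
    obtain ⟨S₀, hsep, haS, hbS⟩ := SMRAux.exists_sep G' hab hno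
    rcases hsep with hs | hs
    · exact (hAF (a, b) he S₀ haS hbS).1 (hM' _ _ _ hs)
    · exact (hAF (a, b) he S₀ haS hbS).2 (hM' _ _ _ hs)
  -- Step B : skeleton comparison map
  set φ : Fin p × Fin p → Fin p × Fin p := fun e => if e ∈ G'.edges then e else e.swap with hφ
  have hφmem : ∀ e ∈ G.edges, φ e ∈ G'.edges := by
    rintro ⟨a, b⟩ he
    have e0 : φ (a, b) = if (a, b) ∈ G'.edges then (a, b) else (b, a) := rfl
    rw [e0]
    by_cases h : (a, b) ∈ G'.edges
    · rw [if_pos h]; exact h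
    · rw [if_neg h]
      rcases edgeAdj a b he with h' | h'
      · exact absurd h' h
      · exact h'
  have hinj : Set.InjOn φ G.edges := by
    rintro ⟨a1, b1⟩ h1 ⟨a2, b2⟩ h2 heq
    have hm1 : (a1, b1) ∈ G.edges := h1
    have hm2 : (a2, b2) ∈ G.edges := h2
    have e1 : φ (a1, b1) = if (a1, b1) ∈ G'.edges then (a1, b1) else (b1, a1) := rfl
    have e2 : φ (a2, b2) = if (a2, b2) ∈ G'.edges then (a2, b2) else (b2, a2) := rfl
    rw [e1, e2] at heq
    by_cases k1 : (a1, b1) ∈ G'.edges <;> by_cases k2 : (a2, b2) ∈ G'.edges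
    · rw [if_pos k1, if_pos k2] at heq; exact heq
    · rw [if_pos k1, if_neg k2] at heq
      injection heq with hx hy
      subst hx; subst hy
      exact (SMRAux.edge_asymm G hm2 hm1).elim
    · rw [if_neg k1, if_pos k2] at heq
      injection heq with hx hy
      subst hx; subst hy
      exact (SMRAux.edge_asymm G hm2 hm1).elim
    · rw [if_neg k1, if_neg k2] at heq
      injection heq with hx hy
      subst hx; subst hy
      rfl
  have hle : G.edges.card ≤ G'.edges.card := by
    classical
    exact Finset.card_le_card_of_injOn φ hφmem hinj
  have hcards : G.edges.card = G'.edges.card := le_antisymm hle hcard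
  have himg : G.edges.image φ = G'.edges := by
    apply Finset.eq_of_subset_of_card_le
    · intro e he
      obtain ⟨e', he', rfl⟩ := Finset.mem_image.1 he
      exact hφmem e' he'
    · rw [Finset.card_image_of_injOn hinj, hcards]
  have adj'Adj : ∀ a b, G'.adj a b → G.adj a b := by
    have key : ∀ a b, (a, b) ∈ G'.edges → G.adj a b := by
      intro a b h'
      have : (a, b) ∈ G.edges.image φ := himg ▸ h'
      obtain ⟨⟨x, y⟩, he, hfe⟩ := Finset.mem_image.1 this
      have e0 : φ (x, y) = if (x, y) ∈ G'.edges then (x, y) else (y, x) := rfl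
      rw [e0] at hfe
      by_cases k : (x, y) ∈ G'.edges
      · rw [if_pos k] at hfe
        injection hfe with hx hy
        subst hx; subst hy
        exact Or.inl he
      · rw [if_neg k] at hfe
        injection hfe with hx hy
        subst hx; subst hy
        exact Or.inr he
    intro a b h'
    rcases h' with h' | h'
    · exact key a b h'
    · exact SMRAux.adj_symm G (key b a h')
  have Hadj : ∀ a b, G.adj a b ↔ G'.adj a b := by
    intro a b
    constructor
    · rintro (h | h)
      · exact edgeAdj a b h
      · exact SMRAux.adj_symm G' (edgeAdj b a h)
    · exact adj'Adj a b
  -- Step C : unshielded colliders agree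
  have Hvs : ∀ a b c, a ≠ c → ¬ G.adj a c → G.adj a b → G.adj b c →
      (G.isCollider a b c ↔ G'.isCollider a b c) := by
    intro a b c hac hnadj hadjab hadjbc
    have hnadj' : ¬ G'.adj a c := fun h => hnadj ((Hadj a c).2 h)
    obtain ⟨S₀, hsep, haS0, hcS0⟩ := SMRAux.exists_sep G' hac hnadj'
    have hCI : CI a c S₀ ∨ CI c a S₀ := by
      rcases hsep with hs | hs
      · exact Or.inl (hM' _ _ _ hs)
      · exact Or.inr (hM' _ _ _ hs)
    have hnconG : ¬ G.dConnected a c S₀ := by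
      intro hcon
      have hdep := hOF a b c hadjab hadjbc hnadj hac S₀ hcon
      rcases hCI with h | h
      · exact hdep.1 h
      · exact hdep.2 h
    have hGblock := SMRAux.triple_blocked G hadjab hadjbc hac hnconG
    have hG'block : (G'.isCollider a b c ∧ ¬ G'.ancestorOfSet b S₀) ∨
        (¬ G'.isCollider a b c ∧ b ∈ S₀) := by
      have hadjab' := (Hadj a b).1 hadjab
      have hadjbc' := (Hadj b c).1 hadjbc
      rcases hsep with hs | hs
      · exact SMRAux.triple_blocked G' hadjab' hadjbc' hac hs.2
      · have hrev := SMRAux.triple_blocked G' (SMRAux.adj_symm G' hadjbc')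
          (SMRAux.adj_symm G' hadjab') (Ne.symm hac) hs.2
        rcases hrev with ⟨h1, h2⟩ | ⟨h1, h2⟩
        · exact Or.inl ⟨SMRAux.col_symm G' h1, h2⟩
        · exact Or.inr ⟨fun hcc => h1 (SMRAux.col_symm G' hcc), h2⟩
    constructor
    · intro hcol
      rcases hGblock with ⟨-, hnAn⟩ | ⟨hnc, -⟩
      · have hbS : b ∉ S₀ := fun h => hnAn (SMRAux.an_of_mem G h)
        rcases hG'block with ⟨h1, -⟩ | ⟨-, h2⟩
        · exact h1
        · exact absurd h2 hbS
      · exact absurd hcol hnc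
    · intro hcol'
      rcases hG'block with ⟨-, hnAn⟩ | ⟨hnc, -⟩
      · have hbS : b ∉ S₀ := fun h => hnAn (SMRAux.an_of_mem G' h)
        rcases hGblock with ⟨h1, -⟩ | ⟨-, h2⟩
        · exact h1
        · exact absurd h2 hbS
      · exact absurd hcol' hnc
  -- Step D : Markov equivalence
  have Hadj' : ∀ a b, G'.adj a b ↔ G.adj a b := fun a b => (Hadj a b).symm
  have Hvs' : ∀ a b c, a ≠ c → ¬ G'.adj a c → G'.adj a b → G'.adj b c →
      (G'.isCollider a b c ↔ G.isCollider a b c) := by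
    intro a b c hac hnadj hadjab hadjbc
    exact (Hvs a b c hac (fun h => hnadj ((Hadj a c).1 h))
      ((Hadj' a b).1 hadjab) ((Hadj' b c).1 hadjbc)).symm
  intro i j S
  constructor
  · rintro ⟨hij, hncon⟩
    exact ⟨hij, fun hcon => hncon (SMRAux.dconn_transfer Hadj Hvs hcon)⟩
  · rintro ⟨hij, hncon⟩
    exact ⟨hij, fun hcon => hncon (SMRAux.dconn_transfer Hadj' Hvs' hcon)⟩
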